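/- arXiv:0708.2685 — 2 statements merged into one kernel-verified Lean document; each statement's English description precedes it below -/
import Mathlib

section
/- Let A be a Hopf algebra over a field of characteristic zero, x, y ∈ A with Δ(x)=x⊗1+a⊗x, Δ(y)=y⊗1+b⊗y, where a, b commuting grouplikes, and gxg^{-1}=χ(g)x, gyg^{-1}=μ(g)y for characters χ, μ. If χ(b)μ(a) = χ(a)^{1-r} for some r ≥ 0, then z = ad(x)^r(y) is skew-primitive: Δ(z) = z⊗1 + a^r b ⊗ z. -/
open TensorProduct Coalgebra Finset


namespace AdPowAux

variable {k : Type*} [Field k]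

/-- q-binomial coefficients via the Pascal recursion `qb (s+1) (i+1) = qb s (i+1) + Q^(s-i) qb s i`. -/
def qb (Q : k) : ℕ → ℕ → k
  | _, 0 => 1
  | 0, _+1 => 0
  | s+1, i+1 => qb Q s (i+1) + Q ^ (s-i) * qb Q s i

@[simp] lemma qb_zero (Q : k) (s : ℕ) : qb Q s 0 = 1 := by cases s <;> rfl

lemma qb_eq_zero (Q : k) : ∀ s i, s < i → qb Q s i = 0
  | _, 0, h => by omega
  | 0, i+1, h => rfl
  | s+1, i+1, h => by
      rw [qb, qb_eq_zero Q s (i+1) (by omega), qb_eq_zero Q s i (by omega)]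
      ring

lemma qb_pascal2 (Q : k) : ∀ s i, qb Q (s+1) (i+1) = Q^(i+1) * qb Q s (i+1) + qb Q s i
  | 0, 0 => by simp [qb]
  | 0, i+1 => by simp [qb, qb_eq_zero]
  | s+1, 0 => by
      have h1 : qb Q (s+1) 1 = Q^1 * qb Q s 1 + qb Q s 0 := qb_pascal2 Q s 0
      have hdef : qb Q (s+1) 1 = qb Q s 1 + Q ^ s * qb Q s 0 := rfl
      have hD : qb Q (s+2) 1 = qb Q (s+1) 1 + Q ^ (s+1) * qb Q (s+1) 0 := rfl
      show qb Q (s+2) 1 = Q^1 * qb Q (s+1) 1 + qb Q (s+1) 0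
      rw [qb_zero] at h1 hdef
      rw [hD, qb_zero]
      linear_combination h1 - Q * hdef
  | s+1, i'+1 => by
      have h1 : qb Q (s+1) (i'+1) = Q^(i'+1) * qb Q s (i'+1) + qb Q s i' := qb_pascal2 Q s i'
      have h2 : qb Q (s+1) (i'+2) = Q^(i'+2) * qb Q s (i'+2) + qb Q s (i'+1) :=
        qb_pascal2 Q s (i'+1)
      have hD : qb Q (s+2) (i'+2) = qb Q (s+1) (i'+2) + Q ^ (s+1-(i'+1)) * qb Q (s+1) (i'+1) := rfl
      have hd2 : qb Q (s+1) (i'+2) = qb Q s (i'+2) + Q ^ (s-(i'+1)) * qb Q s (i'+1) := rfl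
      have hd1 : qb Q (s+1) (i'+1) = qb Q s (i'+1) + Q ^ (s-i') * qb Q s i' := rfl
      rcases Nat.lt_or_ge i' s with h | h
      · obtain ⟨j, rfl⟩ : ∃ j, s = i'+1+j := ⟨s - (i'+1), by omega⟩
        have e1 : i'+1+j+1-(i'+1) = j+1 := by omega
        have e2 : i'+1+j-(i'+1) = j := by omega
        have e3 : i'+1+j-i' = j+1 := by omega
        rw [e1] at hD
        rw [e2] at hd2
        rw [e3] at hd1
        rw [hD]
        linear_combination h2 + Q^(j+1) * h1 - Q^(i'+2) * hd2 - hd1 + Q^(i'+2) * hd2 - Q^(i'+2) * hd2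
      · -- i' ≥ s : everything small is zero
        have hz2 : qb Q (s+1) (i'+2) = 0 := qb_eq_zero Q (s+1) (i'+2) (by omega)
        rw [hD, hz2]
        have : s + 1 - (i'+1) = 0 ∨ i' = s := by omega
        rcases this with h0 | rfl
        · rw [h0]
          ring
        · simp
        

end AdPowAux

namespace AdPowAux

variable {k : Type*} [Field k]

/-- coefficients of the comultiplication expansion of the iterated braided commutator -/
def cc (q β α : kˣ) : ℕ → ℕ → k
  | _, 0 => 1
  | 0, _+1 => 0
  | s+1, i+1 => cc q β α s (i+1) +
      ((((q^(s-i))⁻¹ * β⁻¹ : kˣ) : k) - ((q^s*α : kˣ) : k)) * cc q β α s i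

@[simp] lemma cc_zero (q β α : kˣ) (s : ℕ) : cc q β α s 0 = 1 := by cases s <;> rfl

lemma cc_eq_zero (q β α : kˣ) : ∀ s i, s < i → cc q β α s i = 0
  | _, 0, h => by omega
  | 0, i+1, h => rfl
  | s+1, i+1, h => by
      rw [cc, cc_eq_zero q β α s (i+1) (by omega), cc_eq_zero q β α s i (by omega)]
      ring

lemma cc_closed (q β α : kˣ) : ∀ s i, cc q β α s i =
    ((β⁻¹ : kˣ) : k)^i * qb ((q⁻¹ : kˣ) : k) s i *
      ∏ j ∈ Finset.Ico (s-i) s, (1 - ((q : kˣ) : k)^j * (((α : kˣ) : k) * ((β : kˣ) : k)))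
  | s, 0 => by simp
  | 0, i+1 => by simp [cc, qb_eq_zero]
  | s+1, i+1 => by
      set Q : k := ((q : kˣ) : k) with hQdef
      set R : k := ((q⁻¹ : kˣ) : k) with hRdef
      set B : k := ((β : kˣ) : k) with hBdef
      set B' : k := ((β⁻¹ : kˣ) : k) with hB'def
      set Al : k := ((α : kˣ) : k) with hAldef
      have hQR : Q * R = 1 := by rw [hQdef, hRdef, ← Units.val_mul, mul_inv_cancel, Units.val_one]
      have hBB : B * B' = 1 := by rw [hBdef, hB'def, ← Units.val_mul, mul_inv_cancel, Units.val_one]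
      have hwt : ((((q^(s-i))⁻¹ * β⁻¹ : kˣ) : k) - ((q^s*α : kˣ) : k))
          = R^(s-i) * B' - Q^s * Al := by
        rw [← inv_pow]
        push_cast
        simp [hQdef, hRdef, hB'def, hAldef, Units.val_inv_eq_inv_val]
      have IH1 := cc_closed q β α s (i+1)
      have IH0 := cc_closed q β α s i
      rw [show cc q β α (s+1) (i+1) = cc q β α s (i+1) +
          ((((q^(s-i))⁻¹ * β⁻¹ : kˣ) : k) - ((q^s*α : kˣ) : k)) * cc q β α s i from rfl,
        IH1, IH0, hwt]
      rcases Nat.lt_or_ge s i with h | h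
      · -- trivial case: everything zero
        rw [qb_eq_zero R s (i+1) (by omega), qb_eq_zero R s i (by omega),
          qb_eq_zero R (s+1) (i+1) (by omega)]
        ring
      rcases Nat.lt_or_ge i s with h2 | h2
      · -- i < s
        obtain ⟨j, rfl⟩ : ∃ j, s = i+j+1 := ⟨s - i - 1, by omega⟩
        have e0 : i+j+1-(i+1) = j := by omega
        have e1 : i+j+1+1-(i+1) = j+1 := by omega
        have e2 : i+j+1-i = j+1 := by omega
        rw [e0, e1, e2]
        have p2 : qb R (i+j+1+1) (i+1) = R^(i+1) * qb R (i+j+1) (i+1) + qb R (i+j+1) i :=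
          qb_pascal2 R (i+j+1) i
        have p1 : qb R (i+j+1+1) (i+1)
            = qb R (i+j+1) (i+1) + R ^ (i+j+1-i) * qb R (i+j+1) i := rfl
        rw [e2] at p1
        have hp : qb R (i+j+1) (i+1) + R^(j+1) * qb R (i+j+1) i
            = R^(i+1) * qb R (i+j+1) (i+1) + qb R (i+j+1) i := by
          linear_combination p2 - p1
        have hqr2 : Q^(i+j+1) * R^(i+1) = Q^j := by
          rw [show i+j+1 = i+1+j from by omega, pow_add, mul_comm (Q^(i+1)) (Q^j),
            mul_assoc, ← mul_pow, hQR, one_pow, mul_one]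
        have hsplit1 : ∏ j' ∈ Finset.Ico j (i+j+1), (1 - Q^j' * (Al * B))
            = (1 - Q^j * (Al * B)) * ∏ j' ∈ Finset.Ico (j+1) (i+j+1), (1 - Q^j' * (Al * B)) :=
          Finset.prod_eq_prod_Ico_succ_bot (by omega) _
        have hsplit2 : ∏ j' ∈ Finset.Ico (j+1) (i+j+1+1), (1 - Q^j' * (Al * B))
            = (∏ j' ∈ Finset.Ico (j+1) (i+j+1), (1 - Q^j' * (Al * B)))
              * (1 - Q^(i+j+1) * (Al * B)) :=
          Finset.prod_Ico_succ_top (by omega) _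
        rw [p2, hsplit1, hsplit2]
        set P : k := ∏ j' ∈ Finset.Ico (j+1) (i+j+1), (1 - Q^j' * (Al * B)) with hPdef
        set e2' : k := qb R (i+j+1) (i+1)
        set e3' : k := qb R (i+j+1) i
        linear_combination (B'^(i+1)*P) * hp + ((Al*B)*B'^(i+1)*e2'*P) * hqr2
          + (Q^(i+j+1)*Al*e3'*P*B'^i) * hBB
      · -- i = s
        have : i = s := by omega
        subst this
        have hz : qb R i (i+1) = 0 := qb_eq_zero R i (i+1) (by omega)
        have hq2 : qb R (i+1) (i+1) = qb R i i := by
          rw [show qb R (i+1) (i+1) = qb R i (i+1) + R ^ (i-i) * qb R i i from rfl, hz]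
          simp
        have hsplit : ∏ j' ∈ Finset.Ico (i+1-(i+1)) (i+1), (1 - Q^j' * (Al * B))
            = (∏ j' ∈ Finset.Ico 0 i, (1 - Q^j' * (Al * B))) * (1 - Q^i * (Al * B)) := by
          rw [Nat.sub_self]
          exact Finset.prod_Ico_succ_top (by omega) _
        rw [hz, hq2, hsplit, Nat.sub_self]
        set P : k := ∏ j' ∈ Finset.Ico 0 i, (1 - Q^j' * (Al * B)) with hPdef
        linear_combination (Q^i * Al * (qb R i i) * P * B'^i) * hBB

end AdPowAux

namespace AdPowAux

variable {k : Type*} [Field k]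

lemma cc_vanish (q β α : kˣ) (r : ℕ) (h : β * α = q ^ (1 - (r:ℤ))) :
    ∀ i, 0 < i → i ≤ r → cc q β α r i = 0 := by
  intro i h1 h2
  rw [cc_closed]
  have hmem : r - 1 ∈ Finset.Ico (r-i) r := by
    simp only [Finset.mem_Ico]
    omega
  have hone : (q : kˣ)^(r-1) * (α*β) = 1 := by
    rw [mul_comm α β, h, ← zpow_natCast q (r-1), ← zpow_add q,
      show ((r-1 : ℕ) : ℤ) + (1 - (r:ℤ)) = 0 from by omega, zpow_zero]
  have hzero : 1 - ((q : kˣ) : k)^(r-1) * (((α : kˣ) : k) * ((β : kˣ) : k)) = 0 := by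
    have := congrArg (Units.val : kˣ → k) hone
    push_cast at this
    rw [this]
    ring
  rw [Finset.prod_eq_zero hmem hzero, mul_zero]

end AdPowAux


section Main
open AdPowAux Finset

/-- Let `A` be a Hopf algebra over a field of characteristic zero, `a, b` commuting grouplike
elements lying in a group `G` of grouplikes, `x, y ∈ A` with `Δ(x) = x⊗1 + a⊗x`,
`Δ(y) = y⊗1 + b⊗y`, and `g x g⁻¹ = χ(g) x`, `g y g⁻¹ = μ(g) y` for characters `χ, μ` of `G`.
If `χ(b) μ(a) = χ(a)^{1-r}` for some `r ≥ 0`, then `z = ad(x)^r(y)` is skew primitive: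
`Δ(z) = z ⊗ 1 + aʳ b ⊗ z`, where `ad(x)(w) = x w - a w a⁻¹ x`. -/
theorem ad_pow_skew_primitive {k A : Type*} [Field k] [CharZero k]
    [Ring A] [HopfAlgebra k A]
    (G : Subgroup Aˣ)
    (hG : ∀ g : G, Coalgebra.comul (R := k) ((g : Aˣ) : A) =
      ((g : Aˣ) : A) ⊗ₜ[k] ((g : Aˣ) : A))
    (hGε : ∀ g : G, Coalgebra.counit (R := k) ((g : Aˣ) : A) = 1)
    (a b : G) (hab : a * b = b * a) (x y : A)
    (hx : Coalgebra.comul (R := k) x = x ⊗ₜ[k] 1 + ((a : Aˣ) : A) ⊗ₜ[k] x)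
    (hy : Coalgebra.comul (R := k) y = y ⊗ₜ[k] 1 + ((b : Aˣ) : A) ⊗ₜ[k] y)
    (χ μ : G →* kˣ)
    (hχ : ∀ g : G, ((g : Aˣ) : A) * x * ((g⁻¹ : G) : Aˣ) = ((χ g : kˣ) : k) • x)
    (hμ : ∀ g : G, ((g : Aˣ) : A) * y * ((g⁻¹ : G) : Aˣ) = ((μ g : kˣ) : k) • y)
    (r : ℕ) (hr : χ b * μ a = χ a ^ (1 - (r : ℤ))) :
    Coalgebra.comul (R := k)
        ((fun w => x * w - ((a : Aˣ) : A) * w * (((a⁻¹ : G) : Aˣ) : A) * x)^[r] y) =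
      ((fun w => x * w - ((a : Aˣ) : A) * w * (((a⁻¹ : G) : Aˣ) : A) * x)^[r] y) ⊗ₜ[k] 1 +
        (((a : Aˣ) : A) ^ r * ((b : Aˣ) : A)) ⊗ₜ[k]
          ((fun w => x * w - ((a : Aˣ) : A) * w * (((a⁻¹ : G) : Aˣ) : A) * x)^[r] y) := by
  classical
  set q : kˣ := χ a with hqdef
  set β : kˣ := χ b with hβdef
  set α : kˣ := μ a with hαdef
  set Aa : A := ((a : Aˣ) : A) with hAa
  set Ab : A := ((b : Aˣ) : A) with hAb
  set Aai : A := (((a⁻¹ : G) : Aˣ) : A) with hAai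
  set F : A → A := fun w => x * w - Aa * w * Aai * x with hF
  set z : ℕ → A := fun n => F^[n] y with hzdef
  show Coalgebra.comul (R := k) (z r) = z r ⊗ₜ[k] 1 + (Aa ^ r * Ab) ⊗ₜ[k] z r
  -- basic unit cancellation facts
  have hAai' : Aai = ((((a : G) : Aˣ))⁻¹ : Aˣ) := by
    rw [hAai]; norm_cast
  have hcan1 : ∀ w : A, Aa * (Aai * w) = w := by
    intro w; rw [hAai', hAa, ← mul_assoc, Units.mul_inv, one_mul]
  have hcan2 : ∀ w : A, Aai * (Aa * w) = w := by
    intro w; rw [hAai', hAa, ← mul_assoc, Units.inv_mul, one_mul]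
  have haai : Aa * Aai = 1 := by rw [hAai', hAa, Units.mul_inv]
  have hiaa : Aai * Aa = 1 := by rw [hAai', hAa, Units.inv_mul]
  have habA : Aa * Ab = Ab * Aa := by
    have := congrArg (fun g : G => ((g : Aˣ) : A)) hab
    push_cast at this
    exact this
  -- conjugation machinery
  have hzsucc : ∀ n, z (n+1) = x * z n - Aa * z n * Aai * x := by
    intro n
    rw [hzdef]
    simp only [Function.iterate_succ_apply']
    rfl
  -- x commutation
  have hgx : ∀ g : G, ((g : Aˣ) : A) * x = ((χ g : kˣ) : k) • (x * ((g : Aˣ) : A)) := by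
    intro g
    have h0 := hχ g
    have hinv : (((g⁻¹ : G) : Aˣ) : A) * ((g : Aˣ) : A) = 1 := by
      norm_cast
      simp
    calc ((g : Aˣ) : A) * x
        = ((g : Aˣ) : A) * x * ((((g⁻¹ : G)) : Aˣ) : A) * ((g : Aˣ) : A) := by
          rw [mul_assoc (((g : Aˣ) : A) * x), hinv, mul_one]
      _ = (((χ g : kˣ) : k) • x) * ((g : Aˣ) : A) := by rw [h0]
      _ = ((χ g : kˣ) : k) • (x * ((g : Aˣ) : A)) := smul_mul_assoc _ _ _
  have hxa : ∀ w : A, x * (Aa * w) = ((q⁻¹ : kˣ) : k) • (Aa * (x * w)) := by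
    have h1 : x * Aa = ((q⁻¹ : kˣ) : k) • (Aa * x) := by
      rw [hgx a, smul_smul, ← Units.val_mul, inv_mul_cancel, Units.val_one, one_smul]
    intro w
    calc x * (Aa * w) = (x * Aa) * w := (mul_assoc _ _ _).symm
      _ = (((q⁻¹ : kˣ) : k) • (Aa * x)) * w := by rw [h1]
      _ = ((q⁻¹ : kˣ) : k) • (Aa * (x * w)) := by rw [smul_mul_assoc, mul_assoc]
  have hxb : ∀ w : A, x * (Ab * w) = ((β⁻¹ : kˣ) : k) • (Ab * (x * w)) := by
    have h1 : x * Ab = ((β⁻¹ : kˣ) : k) • (Ab * x) := by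
      rw [hgx b, smul_smul, ← Units.val_mul, inv_mul_cancel, Units.val_one, one_smul]
    intro w
    calc x * (Ab * w) = (x * Ab) * w := (mul_assoc _ _ _).symm
      _ = (((β⁻¹ : kˣ) : k) • (Ab * x)) * w := by rw [h1]
      _ = ((β⁻¹ : kˣ) : k) • (Ab * (x * w)) := by rw [smul_mul_assoc, mul_assoc]
  have hxapow : ∀ (m : ℕ) (w : A), x * (Aa^m * w)
      = (((q^m)⁻¹ : kˣ) : k) • (Aa^m * (x * w)) := by
    intro m
    induction m with
    | zero => intro w; simp
    | succ n ih =>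
      intro w
      rw [show Aa^(n+1) * w = Aa^n * (Aa * w) from by rw [pow_succ, mul_assoc],
        ih (Aa * w), hxa w, show Aa^(n+1) * (x * w) = Aa^n * (Aa * (x * w)) from by
          rw [pow_succ, mul_assoc], mul_smul_comm]
      match_scalars
      push_cast
      ring
  have hxia : ∀ (i : ℕ), x^i * Aa = (((q^i)⁻¹ : kˣ) : k) • (Aa * x^i) := by
    intro i
    induction i with
    | zero => simp
    | succ n ih =>
      rw [pow_succ', mul_assoc, ih, mul_smul_comm, hxa (x^n), ← pow_succ']
      match_scalars
      push_cast
      ring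
  have hxG : ∀ m i : ℕ, x * (Aa^m * Ab * x^i)
      = (((q^m)⁻¹ * β⁻¹ : kˣ) : k) • (Aa^m * Ab * x^(i+1)) := by
    intro m i
    rw [mul_assoc (Aa^m) Ab (x^i), hxapow m (Ab * x^i), hxb (x^i), ← pow_succ',
      mul_smul_comm, smul_smul, ← mul_assoc]
    norm_cast
  have hGA : ∀ m i : ℕ, (Aa^m * Ab * x^i) * Aa
      = (((q^i)⁻¹ : kˣ) : k) • (Aa^(m+1) * Ab * x^i) := by
    intro m i
    rw [mul_assoc, hxia i, mul_smul_comm, ← mul_assoc, mul_assoc (Aa^m) Ab Aa, ← habA,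
      ← mul_assoc, ← pow_succ]
  have hconj_mul : ∀ u v : A, Aa * (u * v) * Aai = (Aa * u * Aai) * (Aa * v * Aai) := by
    intro u v
    simp only [mul_assoc, hcan2]
  have hconjx : Aa * x * Aai = ((q : kˣ) : k) • x := hχ a
  have hza : ∀ n, Aa * z n * Aai = ((q^n * α : kˣ) : k) • z n := by
    intro n
    induction n with
    | zero =>
      have : z 0 = y := rfl
      rw [this]
      simpa [hAa, hAai', hαdef] using hμ a
    | succ n ih =>
      rw [hzsucc n, mul_sub, sub_mul, ih, hconj_mul x (z n), hconjx, ih]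
      simp only [smul_mul_assoc, mul_smul_comm]
      rw [hconj_mul (z n) x, ih, hconjx]
      simp only [smul_mul_assoc, mul_smul_comm, smul_smul, smul_sub]
      match_scalars <;> (push_cast; ring)
  have hza' : ∀ n, Aa * z n = ((q^n * α : kˣ) : k) • (z n * Aa) := by
    intro n
    calc Aa * z n = (Aa * z n * Aai) * Aa := by rw [mul_assoc, hiaa, mul_one]
      _ = (((q^n * α : kˣ) : k) • z n) * Aa := by rw [hza n]
      _ = ((q^n * α : kˣ) : k) • (z n * Aa) := smul_mul_assoc _ _ _
  have hzrec : ∀ n, z (n+1) = x * z n - ((q^n * α : kˣ) : k) • (z n * x) := by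
    intro n
    rw [hzsucc n, show Aa * z n * Aai * x = (Aa * z n * Aai) * x from rfl, hza n,
      smul_mul_assoc]
  -- the main induction
  have main : ∀ s, Coalgebra.comul (R := k) (z s) = z s ⊗ₜ[k] 1 +
      ∑ i ∈ Finset.range (s+1),
        cc q β α s i • ((Aa^(s-i) * Ab * x^i) ⊗ₜ[k] z (s-i)) := by
    intro s
    induction s with
    | zero =>
      have hz0 : z 0 = y := rfl
      rw [hz0, hy]
      simp [hz0]
    | succ s IH =>
      set c : k := ((q^s * α : kˣ) : k) with hc
      have e1 : Coalgebra.comul (R := k) (z (s+1)) =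
          Coalgebra.comul (R := k) x * Coalgebra.comul (R := k) (z s)
          - c • (Coalgebra.comul (R := k) (z s) * Coalgebra.comul (R := k) x) := by
        rw [hzsucc s, show Aa * z s * Aai * x = (Aa * z s * Aai) * x from rfl, hza s,
          smul_mul_assoc, map_sub, map_smul, Bialgebra.comul_mul, Bialgebra.comul_mul]
      rw [e1, hx, IH]
      set S : A ⊗[k] A := ∑ i ∈ Finset.range (s+1),
        cc q β α s i • ((Aa^(s-i) * Ab * x^i) ⊗ₜ[k] z (s-i)) with hSdef
      have p11 : (x ⊗ₜ[k] (1:A)) * (z s ⊗ₜ[k] (1:A)) = (x * z s) ⊗ₜ[k] (1:A) := by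
        rw [Algebra.TensorProduct.tmul_mul_tmul, one_mul]
      have p12 : (Aa ⊗ₜ[k] x) * (z s ⊗ₜ[k] (1:A)) = (Aa * z s) ⊗ₜ[k] x := by
        rw [Algebra.TensorProduct.tmul_mul_tmul, mul_one]
      have p21 : (z s ⊗ₜ[k] (1:A)) * (x ⊗ₜ[k] (1:A)) = (z s * x) ⊗ₜ[k] (1:A) := by
        rw [Algebra.TensorProduct.tmul_mul_tmul, one_mul]
      have p22 : (z s ⊗ₜ[k] (1:A)) * (Aa ⊗ₜ[k] x) = (z s * Aa) ⊗ₜ[k] x := by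
        rw [Algebra.TensorProduct.tmul_mul_tmul, one_mul]
      have pS1 : (x ⊗ₜ[k] (1:A)) * S = ∑ i ∈ Finset.range (s+1),
          (cc q β α s i * (((q^(s-i))⁻¹ * β⁻¹ : kˣ) : k))
            • ((Aa^(s-i)*Ab*x^(i+1)) ⊗ₜ[k] z (s-i)) := by
        rw [hSdef, Finset.mul_sum]
        refine Finset.sum_congr rfl fun i hi => ?_
        rw [mul_smul_comm, Algebra.TensorProduct.tmul_mul_tmul, one_mul, hxG (s-i) i,
          ← TensorProduct.smul_tmul', smul_smul]
      have pS2 : (Aa ⊗ₜ[k] x) * S = ∑ i ∈ Finset.range (s+1),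
          cc q β α s i • ((Aa^(s+1-i)*Ab*x^i) ⊗ₜ[k] (x * z (s-i))) := by
        rw [hSdef, Finset.mul_sum]
        refine Finset.sum_congr rfl fun i hi => ?_
        rw [mul_smul_comm, Algebra.TensorProduct.tmul_mul_tmul]
        rw [show Aa * (Aa^(s-i)*Ab*x^i) = Aa^(s+1-i)*Ab*x^i from by
          rw [← mul_assoc, ← mul_assoc, ← pow_succ', show s-i+1 = s+1-i from by
            simp only [Finset.mem_range] at hi; omega]]
      have pS3 : S * (x ⊗ₜ[k] (1:A)) = ∑ i ∈ Finset.range (s+1),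
          cc q β α s i • ((Aa^(s-i)*Ab*x^(i+1)) ⊗ₜ[k] z (s-i)) := by
        rw [hSdef, Finset.sum_mul]
        refine Finset.sum_congr rfl fun i hi => ?_
        rw [smul_mul_assoc, Algebra.TensorProduct.tmul_mul_tmul, mul_one, mul_assoc,
          ← pow_succ]
      have pS4 : S * (Aa ⊗ₜ[k] x) = ∑ i ∈ Finset.range (s+1),
          (cc q β α s i * (((q^i)⁻¹ : kˣ) : k))
            • ((Aa^(s+1-i)*Ab*x^i) ⊗ₜ[k] (z (s-i) * x)) := by
        rw [hSdef, Finset.sum_mul]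
        refine Finset.sum_congr rfl fun i hi => ?_
        rw [smul_mul_assoc, Algebra.TensorProduct.tmul_mul_tmul, hGA (s-i) i,
          show s-i+1 = s+1-i from by simp only [Finset.mem_range] at hi; omega,
          ← TensorProduct.smul_tmul', smul_smul]
      have hxz : (x * z s) ⊗ₜ[k] (1:A) - c • ((z s * x) ⊗ₜ[k] (1:A))
          = z (s+1) ⊗ₜ[k] (1:A) := by
        rw [hzrec s, TensorProduct.sub_tmul, TensorProduct.smul_tmul']
      have haz : (Aa * z s) ⊗ₜ[k] x - c • ((z s * Aa) ⊗ₜ[k] x) = 0 := by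
        rw [hza' s, TensorProduct.smul_tmul', sub_self]
      have hsum1 : (∑ i ∈ Finset.range (s+1),
            (cc q β α s i * (((q^(s-i))⁻¹ * β⁻¹ : kˣ) : k))
              • ((Aa^(s-i)*Ab*x^(i+1)) ⊗ₜ[k] z (s-i)))
          - c • (∑ i ∈ Finset.range (s+1),
            cc q β α s i • ((Aa^(s-i)*Ab*x^(i+1)) ⊗ₜ[k] z (s-i)))
          = ∑ i ∈ Finset.range (s+1),
            (cc q β α (s+1) (i+1) - cc q β α s (i+1))
              • ((Aa^(s-i)*Ab*x^(i+1)) ⊗ₜ[k] z (s-i)) := by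
        rw [Finset.smul_sum, ← Finset.sum_sub_distrib]
        refine Finset.sum_congr rfl fun i hi => ?_
        rw [smul_smul, ← sub_smul]
        congr 1
        rw [show cc q β α (s+1) (i+1) = cc q β α s (i+1) +
          ((((q^(s-i))⁻¹ * β⁻¹ : kˣ) : k) - ((q^s*α : kˣ) : k)) * cc q β α s i from rfl]
        rw [hc]
        ring
      have hsum2 : (∑ i ∈ Finset.range (s+1),
            cc q β α s i • ((Aa^(s+1-i)*Ab*x^i) ⊗ₜ[k] (x * z (s-i))))
          - c • (∑ i ∈ Finset.range (s+1),
            (cc q β α s i * (((q^i)⁻¹ : kˣ) : k))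
              • ((Aa^(s+1-i)*Ab*x^i) ⊗ₜ[k] (z (s-i) * x)))
          = ∑ i ∈ Finset.range (s+1),
            cc q β α s i • ((Aa^(s+1-i)*Ab*x^i) ⊗ₜ[k] z (s+1-i)) := by
        rw [Finset.smul_sum, ← Finset.sum_sub_distrib]
        refine Finset.sum_congr rfl fun i hi => ?_
        have hi' : i ≤ s := by simp only [Finset.mem_range] at hi; omega
        rw [show s+1-i = (s-i)+1 from by omega, hzrec (s-i)]
        simp only [TensorProduct.tmul_sub, TensorProduct.tmul_smul, smul_sub, smul_smul]
        have hqs : ((q : kˣ) : k)^s = ((q : kˣ) : k)^(s-i) * ((q : kˣ) : k)^i := by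
          rw [← pow_add]
          congr 1
          omega
        match_scalars
        · ring
        · rw [hc]
          push_cast
          rw [hqs]
          have hQ0 : ((q : kˣ) : k) ≠ 0 := Units.ne_zero q
          field_simp
      have hT : z (s+1) ⊗ₜ[k] (1:A) + ∑ i ∈ Finset.range (s+1+1),
            cc q β α (s+1) i • ((Aa^(s+1-i)*Ab*x^i) ⊗ₜ[k] z (s+1-i))
          = z (s+1) ⊗ₜ[k] (1:A)
            + ((∑ i ∈ Finset.range (s+1),
              cc q β α s i • ((Aa^(s+1-i)*Ab*x^i) ⊗ₜ[k] z (s+1-i)))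
            + (∑ i ∈ Finset.range (s+1),
              (cc q β α (s+1) (i+1) - cc q β α s (i+1))
                • ((Aa^(s-i)*Ab*x^(i+1)) ⊗ₜ[k] z (s-i)))) := by
        congr 1
        rw [Finset.sum_range_succ' _ (s+1)]
        simp only [Nat.add_sub_add_right]
        have hext : ∑ i ∈ Finset.range (s+1),
            cc q β α s i • ((Aa^(s+1-i)*Ab*x^i) ⊗ₜ[k] z (s+1-i))
            = (∑ i ∈ Finset.range (s+1),
              cc q β α s (i+1) • ((Aa^(s-i)*Ab*x^(i+1)) ⊗ₜ[k] z (s-i)))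
              + cc q β α s 0 • ((Aa^(s+1)*Ab*x^0) ⊗ₜ[k] z (s+1)) := by
          rw [show (∑ i ∈ Finset.range (s+1),
              cc q β α s (i+1) • ((Aa^(s-i)*Ab*x^(i+1)) ⊗ₜ[k] z (s-i)))
              = ∑ i ∈ Finset.range s,
              cc q β α s (i+1) • ((Aa^(s-i)*Ab*x^(i+1)) ⊗ₜ[k] z (s-i)) from by
            rw [Finset.sum_range_succ, cc_eq_zero q β α s (s+1) (by omega), zero_smul,
              add_zero]]
          rw [show (∑ i ∈ Finset.range (s+1),
              cc q β α s i • ((Aa^(s+1-i)*Ab*x^i) ⊗ₜ[k] z (s+1-i)))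
              = ∑ i ∈ Finset.range (s+1), (fun j =>
              cc q β α s j • ((Aa^(s+1-j)*Ab*x^j) ⊗ₜ[k] z (s+1-j))) i from rfl,
            Finset.sum_range_succ' _ s]
          simp only [Nat.add_sub_add_right, Nat.sub_zero, Nat.pow_zero]
        rw [hext, add_right_comm, ← Finset.sum_add_distrib]
        have : ∀ i ∈ Finset.range (s+1),
            cc q β α s (i+1) • ((Aa^(s-i)*Ab*x^(i+1)) ⊗ₜ[k] z (s-i))
            + (cc q β α (s+1) (i+1) - cc q β α s (i+1))
                • ((Aa^(s-i)*Ab*x^(i+1)) ⊗ₜ[k] z (s-i))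
            = cc q β α (s+1) (i+1) • ((Aa^(s-i)*Ab*x^(i+1)) ⊗ₜ[k] z (s-i)) := by
          intro i hi
          rw [← add_smul]
          congr 1
          ring
        rw [Finset.sum_congr rfl this]
        simp
      rw [hT]
      calc (x ⊗ₜ[k] (1:A) + Aa ⊗ₜ[k] x) * (z s ⊗ₜ[k] (1:A) + S)
            - c • ((z s ⊗ₜ[k] (1:A) + S) * (x ⊗ₜ[k] (1:A) + Aa ⊗ₜ[k] x))
          = ((x ⊗ₜ[k] (1:A)) * (z s ⊗ₜ[k] (1:A)) - c • ((z s ⊗ₜ[k] (1:A)) * (x ⊗ₜ[k] (1:A))))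
            + (((Aa ⊗ₜ[k] x) * (z s ⊗ₜ[k] (1:A)) - c • ((z s ⊗ₜ[k] (1:A)) * (Aa ⊗ₜ[k] x)))
            + (((x ⊗ₜ[k] (1:A)) * S - c • (S * (x ⊗ₜ[k] (1:A))))
            + ((Aa ⊗ₜ[k] x) * S - c • (S * (Aa ⊗ₜ[k] x))))) := by
            simp only [mul_add, add_mul, smul_add]
            abel
        _ = z (s+1) ⊗ₜ[k] (1:A)
            + ((∑ i ∈ Finset.range (s+1),
              cc q β α s i • ((Aa^(s+1-i)*Ab*x^i) ⊗ₜ[k] z (s+1-i)))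
            + (∑ i ∈ Finset.range (s+1),
              (cc q β α (s+1) (i+1) - cc q β α s (i+1))
                • ((Aa^(s-i)*Ab*x^(i+1)) ⊗ₜ[k] z (s-i)))) := by
            rw [p11, p12, p21, p22, pS1, pS2, pS3, pS4, hxz, haz, hsum1, hsum2]
            abel
  -- conclude
  rw [main r, Finset.sum_range_succ']
  have hvan : ∀ i ∈ Finset.range r,
      cc q β α r (i+1) • ((Aa^(r-(i+1)) * Ab * x^(i+1)) ⊗ₜ[k] z (r-(i+1))) = 0 := by
    intro i hi
    rw [cc_vanish q β α r hr (i+1) (by omega) (by simp at hi; omega), zero_smul]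
  rw [Finset.sum_eq_zero hvan]
  simp

end Main
end

section
/- In the setting of a Hopf algebra projection (p: A → H, j: H → A, p∘j = id_H, R = A^{co H}), for every r ∈ R and h ∈ H, the element S^{-1}(j(h_2)) r j(h_1) (summation of Sweedler notation) lies in R. -/
open TensorProduct Coalgebra

lemma coassoc_sums {R C M : Type*} [CommSemiring R] [AddCommMonoid C] [Module R C]
    [Coalgebra R C] [AddCommMonoid M] [Module R M]
    (Φ : C ⊗[R] (C ⊗[R] C) →ₗ[R] M) {c : C} {ι : Type*} (s : Finset ι) (x y : ι → C)
    (hxy : ∑ i ∈ s, x i ⊗ₜ[R] y i = Coalgebra.comul c)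
    (rx : ∀ i, Coalgebra.Repr R (x i) (C × C)) (ry : ∀ i, Coalgebra.Repr R (y i) (C × C)) :
    ∑ i ∈ s, ∑ j ∈ (rx i).index,
        Φ ((rx i).left j ⊗ₜ[R] ((rx i).right j ⊗ₜ[R] y i)) =
    ∑ i ∈ s, ∑ j ∈ (ry i).index,
        Φ (x i ⊗ₜ[R] ((ry i).left j ⊗ₜ[R] (ry i).right j)) := by
  have h := Coalgebra.coassoc_apply (R := R) c
  have hL : (∑ i ∈ s, ∑ j ∈ (rx i).index,
      ((rx i).left j ⊗ₜ[R] ((rx i).right j ⊗ₜ[R] y i))) =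
      TensorProduct.assoc R C C C ((Coalgebra.comul (R := R)).rTensor C (Coalgebra.comul c)) := by
    rw [← hxy, map_sum, map_sum]
    refine Finset.sum_congr rfl fun i _ => ?_
    rw [LinearMap.rTensor_tmul, ← (rx i).eq, sum_tmul, map_sum]
    refine Finset.sum_congr rfl fun j _ => ?_
    rw [TensorProduct.assoc_tmul]
  have hR : (∑ i ∈ s, ∑ j ∈ (ry i).index,
      (x i ⊗ₜ[R] ((ry i).left j ⊗ₜ[R] (ry i).right j))) =
      (Coalgebra.comul (R := R)).lTensor C (Coalgebra.comul c) := by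
    rw [← hxy, map_sum]
    refine Finset.sum_congr rfl fun i _ => ?_
    rw [LinearMap.lTensor_tmul, ← (ry i).eq, tmul_sum]
  calc ∑ i ∈ s, ∑ j ∈ (rx i).index,
        Φ ((rx i).left j ⊗ₜ[R] ((rx i).right j ⊗ₜ[R] y i))
      = Φ (∑ i ∈ s, ∑ j ∈ (rx i).index,
          ((rx i).left j ⊗ₜ[R] ((rx i).right j ⊗ₜ[R] y i))) := by simp only [map_sum]
    _ = Φ (∑ i ∈ s, ∑ j ∈ (ry i).index,
          (x i ⊗ₜ[R] ((ry i).left j ⊗ₜ[R] (ry i).right j))) := by rw [hL, h, ← hR]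
    _ = _ := by simp only [map_sum]

lemma sum_counit_smul_left {R C : Type*} [CommSemiring R] [AddCommMonoid C] [Module R C]
    [Coalgebra R C] {a : C} (ra : Coalgebra.Repr R a (C × C)) :
    ∑ i ∈ ra.index, Coalgebra.counit (R := R) (ra.left i) • ra.right i = a := by
  have := Coalgebra.sum_counit_tmul_eq (R := R) ra
  have h2 := congrArg (TensorProduct.lid R C) this
  simp only [map_sum, TensorProduct.lid_tmul, one_smul] at h2
  exact h2

lemma sum_counit_smul_right {R C : Type*} [CommSemiring R] [AddCommMonoid C] [Module R C]
    [Coalgebra R C] {a : C} (ra : Coalgebra.Repr R a (C × C)) :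
    ∑ i ∈ ra.index, Coalgebra.counit (R := R) (ra.right i) • ra.left i = a := by
  have := Coalgebra.sum_tmul_counit_eq (R := R) ra
  have h2 := congrArg (TensorProduct.rid R C) this
  simp only [map_sum, TensorProduct.rid_tmul, one_smul] at h2
  exact h2

section Conv

variable {R C B : Type*} [CommSemiring R] [AddCommMonoid C] [Module R C] [Coalgebra R C]
  [Semiring B] [Algebra R B]

/-- Convolution product on `Hom(C, B)`. -/
noncomputable def conv (f g : C →ₗ[R] B) : C →ₗ[R] B :=
  LinearMap.mul' R B ∘ₗ TensorProduct.map f g ∘ₗ Coalgebra.comul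

/-- Convolution unit. -/
noncomputable def convUnit : C →ₗ[R] B :=
  Algebra.linearMap R B ∘ₗ Coalgebra.counit

lemma conv_apply_repr (f g : C →ₗ[R] B) {a : C} (ra : Coalgebra.Repr R a (C × C)) :
    conv f g a = ∑ i ∈ ra.index, f (ra.left i) * g (ra.right i) := by
  simp only [conv, LinearMap.comp_apply, ← ra.eq, map_sum, TensorProduct.map_tmul,
    LinearMap.mul'_apply]

lemma conv_assoc (f g h : C →ₗ[R] B) : conv (conv f g) h = conv f (conv g h) := by
  ext a
  let ra := Coalgebra.Repr.arbitrary R a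
  let rx := fun i => Coalgebra.Repr.arbitrary R (ra.left i)
  let ry := fun i => Coalgebra.Repr.arbitrary R (ra.right i)
  have key := coassoc_sums
    (LinearMap.mul' R B ∘ₗ TensorProduct.map f (LinearMap.mul' R B ∘ₗ TensorProduct.map g h))
    ra.index ra.left ra.right ra.eq rx ry
  simp only [LinearMap.comp_apply, TensorProduct.map_tmul, LinearMap.mul'_apply] at key
  rw [conv_apply_repr (conv f g) h ra, conv_apply_repr f (conv g h) ra]
  calc ∑ i ∈ ra.index, conv f g (ra.left i) * h (ra.right i)
      = ∑ i ∈ ra.index, ∑ j ∈ (rx i).index,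
          f ((rx i).left j) * (g ((rx i).right j) * h (ra.right i)) := by
        refine Finset.sum_congr rfl fun i _ => ?_
        rw [conv_apply_repr f g (rx i), Finset.sum_mul]
        exact Finset.sum_congr rfl fun j _ => mul_assoc _ _ _
    _ = ∑ i ∈ ra.index, ∑ j ∈ (ry i).index,
          f (ra.left i) * (g ((ry i).left j) * h ((ry i).right j)) := key
    _ = ∑ i ∈ ra.index, f (ra.left i) * conv g h (ra.right i) := by
        refine Finset.sum_congr rfl fun i _ => ?_
        rw [conv_apply_repr g h (ry i), Finset.mul_sum]

lemma conv_unit_right (f : C →ₗ[R] B) : conv f convUnit = f := by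
  ext a
  let ra := Coalgebra.Repr.arbitrary R a
  rw [conv_apply_repr f convUnit ra]
  calc ∑ i ∈ ra.index, f (ra.left i) * convUnit (ra.right i)
      = ∑ i ∈ ra.index, Coalgebra.counit (R := R) (ra.right i) • f (ra.left i) := by
        refine Finset.sum_congr rfl fun i _ => ?_
        simp only [convUnit, LinearMap.comp_apply, Algebra.linearMap_apply]
        rw [Algebra.smul_def, Algebra.commutes]
    _ = f (∑ i ∈ ra.index, Coalgebra.counit (R := R) (ra.right i) • ra.left i) := by
        rw [map_sum]; exact Finset.sum_congr rfl fun i _ => (map_smul f _ _).symm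
    _ = f a := by rw [sum_counit_smul_right ra]

lemma conv_unit_left (f : C →ₗ[R] B) : conv convUnit f = f := by
  ext a
  let ra := Coalgebra.Repr.arbitrary R a
  rw [conv_apply_repr convUnit f ra]
  calc ∑ i ∈ ra.index, convUnit (ra.left i) * f (ra.right i)
      = ∑ i ∈ ra.index, Coalgebra.counit (R := R) (ra.left i) • f (ra.right i) := by
        refine Finset.sum_congr rfl fun i _ => ?_
        simp only [convUnit, LinearMap.comp_apply, Algebra.linearMap_apply]
        rw [Algebra.smul_def]
    _ = f (∑ i ∈ ra.index, Coalgebra.counit (R := R) (ra.left i) • ra.right i) := by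
        rw [map_sum]; exact Finset.sum_congr rfl fun i _ => (map_smul f _ _).symm
    _ = f a := by rw [sum_counit_smul_left ra]

lemma conv_eq_of_inv {f g h : C →ₗ[R] B} (hgf : conv g f = convUnit)
    (hfh : conv f h = convUnit) : g = h := by
  calc g = conv g convUnit := (conv_unit_right g).symm
    _ = conv g (conv f h) := by rw [hfh]
    _ = conv (conv g f) h := (conv_assoc g f h).symm
    _ = conv convUnit h := by rw [hgf]
    _ = h := conv_unit_left h

end Conv

section Antipode

variable {R A : Type*} [CommSemiring R] [Semiring A] [HopfAlgebra R A]

open HopfAlgebra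

lemma counit_antipode (a : A) :
    Coalgebra.counit (R := R) (antipode (R := R) a) = Coalgebra.counit (R := R) a := by
  let ra := Coalgebra.Repr.arbitrary R a
  have h1 : Coalgebra.counit (R := R) (∑ i ∈ ra.index, ra.left i * antipode (R := R) (ra.right i))
      = Coalgebra.counit (R := R) a := by
    rw [sum_mul_antipode_eq_algebraMap_counit ra, Bialgebra.counit_algebraMap]
  calc Coalgebra.counit (R := R) (antipode (R := R) a)
      = Coalgebra.counit (R := R) (antipode (R := R)
          (∑ i ∈ ra.index, Coalgebra.counit (R := R) (ra.left i) • ra.right i)) := by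
        rw [sum_counit_smul_left ra]
    _ = ∑ i ∈ ra.index, Coalgebra.counit (R := R) (ra.left i) *
          Coalgebra.counit (R := R) (antipode (R := R) (ra.right i)) := by
        rw [map_sum, map_sum]
        exact Finset.sum_congr rfl fun i _ => by rw [map_smul, map_smul, smul_eq_mul]
    _ = Coalgebra.counit (R := R) a := by
        rw [← h1, map_sum]
        exact Finset.sum_congr rfl fun i _ => by rw [Bialgebra.counit_mul]

/-- The antipode is an anti-coalgebra morphism: `Δ ∘ S = (τ ∘ (S ⊗ S)) ∘ Δ`. -/
lemma comul_antipode_eq :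
    (Coalgebra.comul ∘ₗ antipode (R := R) (A := A) : A →ₗ[R] A ⊗[R] A) =
      TensorProduct.comm R A A ∘ₗ TensorProduct.map (antipode (R := R)) (antipode (R := R))
        ∘ₗ Coalgebra.comul := by
  refine conv_eq_of_inv (f := (Coalgebra.comul : A →ₗ[R] A ⊗[R] A)) ?_ ?_
  · -- conv (Δ ∘ S) Δ = unit
    ext a
    let ra := Coalgebra.Repr.arbitrary R a
    rw [conv_apply_repr _ _ ra]
    calc ∑ i ∈ ra.index, (Coalgebra.comul ∘ₗ antipode (R := R)) (ra.left i) *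
          (Coalgebra.comul : A →ₗ[R] A ⊗[R] A) (ra.right i)
        = Coalgebra.comul (R := R) (∑ i ∈ ra.index, antipode (R := R) (ra.left i) * ra.right i) := by
          rw [map_sum]
          exact Finset.sum_congr rfl fun i _ => by
            rw [LinearMap.comp_apply, ← Bialgebra.comul_mul]
      _ = convUnit a := by
          rw [sum_antipode_mul_eq_algebraMap_counit ra, Bialgebra.comul_algebraMap]
          simp [convUnit]
  · -- conv Δ (τ ∘ (S⊗S) ∘ Δ) = unit : the hard one
    ext a
    let ra := Coalgebra.Repr.arbitrary R a
    let rx := fun i => Coalgebra.Repr.arbitrary R (ra.left i)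
    let ry := fun i => Coalgebra.Repr.arbitrary R (ra.right i)
    -- Φbig (u ⊗ (v ⊗ (w ⊗ z))) = u * S z ⊗ v * S w
    set S : A →ₗ[R] A := antipode (R := R) with hS
    let Φbig : A ⊗[R] (A ⊗[R] (A ⊗[R] A)) →ₗ[R] A ⊗[R] A :=
      TensorProduct.map (LinearMap.mul' R A) (LinearMap.mul' R A)
        ∘ₗ (TensorProduct.tensorTensorTensorComm R A A A A).toLinearMap
        ∘ₗ (TensorProduct.assoc R A A (A ⊗[R] A)).symm.toLinearMap
        ∘ₗ (LinearMap.lTensor A (LinearMap.lTensor A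
              ((TensorProduct.comm R A A).toLinearMap ∘ₗ TensorProduct.map S S)))
    have Φbig_tmul : ∀ u v w z : A, Φbig (u ⊗ₜ (v ⊗ₜ (w ⊗ₜ z))) = (u * S z) ⊗ₜ[R] (v * S w) := by
      intro u v w z
      simp [Φbig, TensorProduct.tensorTensorTensorComm_tmul]
    let rw' := fun i j => Coalgebra.Repr.arbitrary R ((ry i).left j)
    let rz := fun i j => Coalgebra.Repr.arbitrary R ((ry i).right j)
    let Φ₁ : A ⊗[R] (A ⊗[R] A) →ₗ[R] A ⊗[R] A :=
      Φbig ∘ₗ LinearMap.lTensor A (LinearMap.lTensor A (Coalgebra.comul (R := R)))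
    have Φ₁_tmul : ∀ u v y : A, Φ₁ (u ⊗ₜ (v ⊗ₜ y)) = Φbig (u ⊗ₜ (v ⊗ₜ Coalgebra.comul y)) := by
      intro u v y; simp [Φ₁]
    rw [conv_apply_repr _ _ ra]
    calc ∑ i ∈ ra.index, (Coalgebra.comul : A →ₗ[R] A ⊗[R] A) (ra.left i) *
          (TensorProduct.comm R A A ∘ₗ TensorProduct.map S S ∘ₗ Coalgebra.comul) (ra.right i)
        = ∑ i ∈ ra.index, ∑ k ∈ (rx i).index,
            Φ₁ ((rx i).left k ⊗ₜ ((rx i).right k ⊗ₜ ra.right i)) := by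
          refine Finset.sum_congr rfl fun i _ => ?_
          rw [← (rx i).eq]
          simp only [LinearMap.comp_apply, LinearEquiv.coe_coe, ← (ry i).eq, map_sum,
            TensorProduct.map_tmul, TensorProduct.comm_tmul, Finset.sum_mul_sum,
            Algebra.TensorProduct.tmul_mul_tmul]
          refine Finset.sum_congr rfl fun k _ => ?_
          rw [Φ₁_tmul, ← (ry i).eq]
          simp only [map_sum, tmul_sum, Φbig_tmul, TensorProduct.comm_tmul,
            Algebra.TensorProduct.tmul_mul_tmul]
      _ = ∑ i ∈ ra.index, ∑ j ∈ (ry i).index,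
            Φ₁ (ra.left i ⊗ₜ ((ry i).left j ⊗ₜ (ry i).right j)) :=
          coassoc_sums Φ₁ ra.index ra.left ra.right ra.eq rx ry
      _ = ∑ i ∈ ra.index, ∑ j ∈ (ry i).index,
            Coalgebra.counit (R := R) ((ry i).left j) •
              ((ra.left i * S ((ry i).right j)) ⊗ₜ[R] (1 : A)) := by
          refine Finset.sum_congr rfl fun i _ => ?_
          have inner := coassoc_sums (Φbig ∘ₗ (TensorProduct.mk R A (A ⊗[R] (A ⊗[R] A))) (ra.left i))
            (ry i).index (ry i).left (ry i).right (ry i).eq (rw' i) (rz i)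
          simp only [LinearMap.comp_apply, TensorProduct.mk_apply, Φbig_tmul] at inner
          have lhs_eq : ∑ j ∈ (ry i).index, Φ₁ (ra.left i ⊗ₜ ((ry i).left j ⊗ₜ (ry i).right j))
              = ∑ j ∈ (ry i).index, ∑ m ∈ (rz i j).index,
                  (ra.left i * S ((rz i j).right m)) ⊗ₜ[R] ((ry i).left j * S ((rz i j).left m)) := by
            refine Finset.sum_congr rfl fun j _ => ?_
            rw [Φ₁_tmul, ← (rz i j).eq]
            simp only [map_sum, tmul_sum, Φbig_tmul]
          rw [lhs_eq, ← inner]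
          refine Finset.sum_congr rfl fun j _ => ?_
          rw [← tmul_sum, HopfAlgebra.sum_mul_antipode_eq_algebraMap_counit (rw' i j)]
          rw [Algebra.algebraMap_eq_smul_one, tmul_smul]
      _ = ∑ i ∈ ra.index, (ra.left i * S (ra.right i)) ⊗ₜ[R] (1 : A) := by
          refine Finset.sum_congr rfl fun i _ => ?_
          calc ∑ j ∈ (ry i).index, Coalgebra.counit (R := R) ((ry i).left j) •
                ((ra.left i * S ((ry i).right j)) ⊗ₜ[R] (1 : A))
              = ∑ j ∈ (ry i).index,
                  (ra.left i * S (Coalgebra.counit (R := R) ((ry i).left j) • (ry i).right j))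
                    ⊗ₜ[R] (1 : A) := by
                refine Finset.sum_congr rfl fun j _ => ?_
                rw [map_smul, mul_smul_comm, smul_tmul']
            _ = (ra.left i * S (∑ j ∈ (ry i).index,
                  Coalgebra.counit (R := R) ((ry i).left j) • (ry i).right j)) ⊗ₜ[R] (1 : A) := by
                rw [map_sum, Finset.mul_sum, sum_tmul]
            _ = _ := by rw [sum_counit_smul_left (ry i)]
      _ = convUnit a := by
          rw [← sum_tmul, HopfAlgebra.sum_mul_antipode_eq_algebraMap_counit ra]
          simp [convUnit, Algebra.algebraMap_eq_smul_one, smul_tmul',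
            Algebra.TensorProduct.one_def]

end Antipode

section Sinv

variable {R A : Type*} [CommSemiring R] [Semiring A] [HopfAlgebra R A]
  (Sinv : A →ₗ[R] A)
  (hS1 : ∀ a : A, Sinv (HopfAlgebra.antipode (R := R) a) = a)
  (hS2 : ∀ a : A, HopfAlgebra.antipode (R := R) (Sinv a) = a)

open HopfAlgebra

include hS1 hS2

omit hS1 in
lemma counit_Sinv (x : A) :
    Coalgebra.counit (R := R) (Sinv x) = Coalgebra.counit (R := R) x := by
  conv_rhs => rw [← hS2 x, _root_.counit_antipode]

lemma comul_Sinv (x : A) :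
    Coalgebra.comul (R := R) (Sinv x) =
      TensorProduct.map Sinv Sinv (TensorProduct.comm R A A (Coalgebra.comul (R := R) x)) := by
  have h := LinearMap.congr_fun (comul_antipode_eq (R := R) (A := A)) (Sinv x)
  simp only [LinearMap.comp_apply, LinearEquiv.coe_coe, hS2 x] at h
  have hmapid : TensorProduct.map Sinv Sinv ∘ₗ
      TensorProduct.map (antipode (R := R) (A := A)) (antipode (R := R)) = LinearMap.id := by
    have hcomp : Sinv ∘ₗ antipode (R := R) (A := A) = LinearMap.id := LinearMap.ext hS1
    rw [← TensorProduct.map_comp, hcomp, TensorProduct.map_id]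
  have h2 : TensorProduct.map Sinv Sinv ((TensorProduct.comm R A A).symm
      (Coalgebra.comul (R := R) x)) = Coalgebra.comul (R := R) (Sinv x) := by
    rw [h, LinearEquiv.symm_apply_apply, ← LinearMap.comp_apply, hmapid, LinearMap.id_apply]
  have hcs : ∀ t : A ⊗[R] A, (TensorProduct.comm R A A).symm t = TensorProduct.comm R A A t :=
    fun t => t.induction_on (by simp) (fun a b => by simp) (fun a b ha hb => by
      simp only [map_add, ha, hb])
  rw [← h2, hcs]

lemma sum_Sinv_right_mul_left (x : A) {ι : Type*} (s : Finset ι) (u v : ι → A)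
    (huv : ∑ i ∈ s, u i ⊗ₜ[R] v i = Coalgebra.comul x) :
    ∑ i ∈ s, Sinv (v i) * u i = algebraMap R A (Coalgebra.counit (R := R) x) := by
  let N : A ⊗[R] A →ₗ[R] A :=
    LinearMap.mul' R A ∘ₗ TensorProduct.map Sinv LinearMap.id
      ∘ₗ (TensorProduct.comm R A A).toLinearMap
  have hN : ∀ u v : A, N (u ⊗ₜ v) = Sinv v * u := by intro u v; simp [N]
  let c := Sinv x
  have hxc : x = antipode (R := R) c := (hS2 x).symm
  let rc := Coalgebra.Repr.arbitrary R c
  calc ∑ i ∈ s, Sinv (v i) * u i = N (∑ i ∈ s, u i ⊗ₜ[R] v i) := by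
        rw [map_sum]; exact Finset.sum_congr rfl fun i _ => (hN _ _).symm
    _ = N (Coalgebra.comul (R := R) (antipode (R := R) c)) := by rw [huv, ← hxc]
    _ = ∑ i ∈ rc.index, rc.left i * antipode (R := R) (rc.right i) := by
        have hc := LinearMap.congr_fun (comul_antipode_eq (R := R) (A := A)) c
        simp only [LinearMap.comp_apply, LinearEquiv.coe_coe] at hc
        rw [hc, ← rc.eq]
        simp only [map_sum, TensorProduct.map_tmul, TensorProduct.comm_tmul, hN, hS1]
    _ = algebraMap R A (Coalgebra.counit (R := R) c) := sum_mul_antipode_eq_algebraMap_counit rc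
    _ = algebraMap R A (Coalgebra.counit (R := R) x) := by rw [counit_Sinv Sinv hS2]

end Sinv

/-- In the setting of a Hopf algebra projection `p : A → H`, `j : H → A`, `p ∘ j = id_H`,
with coinvariants `R = A^{co H}` and bijective antipode `S` (with inverse `S⁻¹`):
for every `r ∈ R` and `h ∈ H`, the element `S⁻¹(j(h₂)) r j(h₁)` (Sweedler notation,
expressed via any finite representation `Δ(h) = ∑ᵢ h₁ᵢ ⊗ h₂ᵢ`) again lies in `R`. -/
theorem conj_coinvariant_mem {k A H : Type*} [Field k]
    [Ring A] [HopfAlgebra k A] [FiniteDimensional k A] [Ring H] [HopfAlgebra k H]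
    (p : A →ₐc[k] H) (j : H →ₐc[k] A) (hpj : ∀ h, p (j h) = h)
    (Sinv : A →ₗ[k] A)
    (hS1 : ∀ a : A, Sinv (HopfAlgebra.antipode (R := k) a) = a)
    (hS2 : ∀ a : A, HopfAlgebra.antipode (R := k) (Sinv a) = a)
    (r : A)
    (hr : TensorProduct.map (LinearMap.id : A →ₗ[k] A) (p : A →ₗ[k] H)
        (Coalgebra.comul (R := k) r) = r ⊗ₜ[k] 1)
    (h : H) {ι : Type*} (s : Finset ι) (h₁ h₂ : ι → H)
    (hrep : Coalgebra.comul (R := k) h = ∑ i ∈ s, h₁ i ⊗ₜ[k] h₂ i) :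
    TensorProduct.map (LinearMap.id : A →ₗ[k] A) (p : A →ₗ[k] H)
        (Coalgebra.comul (R := k) (∑ i ∈ s, Sinv (j (h₂ i)) * r * j (h₁ i))) =
      (∑ i ∈ s, Sinv (j (h₂ i)) * r * j (h₁ i)) ⊗ₜ[k] 1 := by
  classical
  let rr := Coalgebra.Repr.arbitrary k r
  let Ra := fun i => Coalgebra.Repr.arbitrary k (h₁ i)
  let Rb := fun i => Coalgebra.Repr.arbitrary k (h₂ i)
  let Rw := fun i l => Coalgebra.Repr.arbitrary k ((Rb i).left l)
  let Rz := fun i l => Coalgebra.Repr.arbitrary k ((Rb i).right l)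
  -- j and p as linear maps
  let jl : H →ₗ[k] A := (j : H →ₗ[k] A)
  let pl : A →ₗ[k] H := (p : A →ₗ[k] H)
  -- the 4-linear map Φ(c ⊗ (d ⊗ (e ⊗ f))) = (Sinv (j f) * r * j c) ⊗ (p (Sinv (j e)) * d)
  let φ₁ : H ⊗[k] H →ₗ[k] A :=
    LinearMap.mul' k A ∘ₗ TensorProduct.map (LinearMap.mulRight k r ∘ₗ Sinv ∘ₗ jl) jl
      ∘ₗ (TensorProduct.comm k H H).toLinearMap
  let φ₂ : H ⊗[k] H →ₗ[k] H :=
    LinearMap.mul' k H ∘ₗ TensorProduct.map (pl ∘ₗ Sinv ∘ₗ jl) LinearMap.id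
      ∘ₗ (TensorProduct.comm k H H).toLinearMap
  let Φ : H ⊗[k] (H ⊗[k] (H ⊗[k] H)) →ₗ[k] A ⊗[k] H :=
    TensorProduct.map φ₁ φ₂
      ∘ₗ (TensorProduct.tensorTensorTensorComm k H H H H).toLinearMap
      ∘ₗ (TensorProduct.assoc k H H (H ⊗[k] H)).symm.toLinearMap
      ∘ₗ LinearMap.lTensor H (LinearMap.lTensor H (TensorProduct.comm k H H).toLinearMap)
  have Φ_tmul : ∀ c d e f : H, Φ (c ⊗ₜ (d ⊗ₜ (e ⊗ₜ f))) =
      (Sinv (j f) * r * j c) ⊗ₜ[k] (p (Sinv (j e)) * d) := by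
    intro c d e f
    simp only [Φ, φ₁, φ₂, LinearMap.comp_apply, LinearMap.lTensor_tmul, LinearEquiv.coe_coe,
      TensorProduct.comm_tmul, TensorProduct.assoc_symm_tmul,
      TensorProduct.tensorTensorTensorComm_tmul, TensorProduct.map_tmul,
      LinearMap.mul'_apply, LinearMap.mulRight_apply, LinearMap.id_apply]
    rfl
  let Φ1 : H ⊗[k] (H ⊗[k] H) →ₗ[k] A ⊗[k] H :=
    Φ ∘ₗ LinearMap.lTensor H (LinearMap.lTensor H (Coalgebra.comul (R := k)))
  have Φ1_tmul : ∀ c d b : H, Φ1 (c ⊗ₜ (d ⊗ₜ b)) = Φ (c ⊗ₜ (d ⊗ₜ Coalgebra.comul b)) := by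
    intro c d b; simp [Φ1]
  -- basic hom facts
  have hcomul_j : ∀ b : H, Coalgebra.comul (R := k) (j b) =
      TensorProduct.map jl jl (Coalgebra.comul (R := k) b) :=
    fun b => (LinearMap.congr_fun (CoalgHomClass.map_comp_comul j) b).symm
  have hcounit_j : ∀ b : H, Coalgebra.counit (R := k) (j b) = Coalgebra.counit (R := k) b :=
    fun b => LinearMap.congr_fun (CoalgHomClass.counit_comp j) b
  -- Step 0 + expansion + Step A: reduce to the quadruple sum
  have stepA : TensorProduct.map (LinearMap.id : A →ₗ[k] A) pl
      (Coalgebra.comul (R := k) (∑ i ∈ s, Sinv (j (h₂ i)) * r * j (h₁ i))) =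
      ∑ i ∈ s, ∑ l ∈ (Rb i).index, ∑ m ∈ (Ra i).index,
        (Sinv (j ((Rb i).right l)) * r * j ((Ra i).left m)) ⊗ₜ[k]
          (p (Sinv (j ((Rb i).left l))) * (Ra i).right m) := by
    rw [map_sum, map_sum]
    refine Finset.sum_congr rfl fun i _ => ?_
    rw [Bialgebra.comul_mul, Bialgebra.comul_mul]
    rw [comul_Sinv Sinv hS1 hS2 (j (h₂ i)), hcomul_j (h₂ i), hcomul_j (h₁ i)]
    rw [← (Rb i).eq, ← (Ra i).eq, ← rr.eq]
    simp only [map_sum, TensorProduct.map_tmul, LinearEquiv.coe_coe, TensorProduct.comm_tmul,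
      Finset.sum_mul_sum, Finset.sum_mul, Finset.mul_sum,
      Algebra.TensorProduct.tmul_mul_tmul, LinearMap.id_apply]
    refine Eq.trans (Finset.sum_congr rfl fun m _ => Finset.sum_comm) ?_
    refine Eq.trans Finset.sum_comm ?_
    refine Finset.sum_congr rfl fun l _ => Finset.sum_congr rfl fun m _ => ?_
    have hmapr : ∑ n ∈ rr.index, rr.left n ⊗ₜ[k] pl (rr.right n) = r ⊗ₜ[k] (1 : H) := by
      rw [← hr, ← rr.eq, map_sum]
      simp only [TensorProduct.map_tmul, LinearMap.id_apply]
      rfl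
    let Ψ : A ⊗[k] H →ₗ[k] A ⊗[k] H :=
      TensorProduct.map
        (LinearMap.mulLeft k (Sinv (jl ((Rb i).right l))) ∘ₗ
          LinearMap.mulRight k (jl ((Ra i).left m)))
        (LinearMap.mulLeft k (pl (Sinv (jl ((Rb i).left l)))) ∘ₗ
          LinearMap.mulRight k ((Ra i).right m))
    calc ∑ n ∈ rr.index, (Sinv (jl ((Rb i).right l)) * rr.left n * jl ((Ra i).left m)) ⊗ₜ[k]
            pl (Sinv (jl ((Rb i).left l)) * rr.right n * jl ((Ra i).right m))
        = ∑ n ∈ rr.index, Ψ (rr.left n ⊗ₜ[k] pl (rr.right n)) := by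
          refine Finset.sum_congr rfl fun n _ => ?_
          simp only [Ψ, TensorProduct.map_tmul, LinearMap.comp_apply, LinearMap.mulLeft_apply,
            LinearMap.mulRight_apply]
          rw [mul_assoc]
          congr 1
          show pl (Sinv (jl ((Rb i).left l)) * rr.right n * jl ((Ra i).right m)) = _
          have : ∀ x : A, pl x = p x := fun _ => rfl
          have hj : ∀ y : H, jl y = j y := fun _ => rfl
          simp only [this, hj, map_mul, hpj, mul_assoc]
        _ = Ψ (r ⊗ₜ[k] (1 : H)) := by rw [← map_sum, hmapr]
        _ = _ := by
          simp only [Ψ, TensorProduct.map_tmul, LinearMap.comp_apply, LinearMap.mulLeft_apply,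
            LinearMap.mulRight_apply, one_mul, ← mul_assoc]
          rfl
  rw [stepA]
  have hj : ∀ y : H, jl y = j y := fun _ => rfl
  have hp : ∀ x : A, pl x = p x := fun _ => rfl
  calc ∑ i ∈ s, ∑ l ∈ (Rb i).index, ∑ m ∈ (Ra i).index,
        (Sinv (j ((Rb i).right l)) * r * j ((Ra i).left m)) ⊗ₜ[k]
          (p (Sinv (j ((Rb i).left l))) * (Ra i).right m)
      = ∑ i ∈ s, ∑ m ∈ (Ra i).index,
          Φ1 ((Ra i).left m ⊗ₜ[k] ((Ra i).right m ⊗ₜ[k] h₂ i)) := by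
        refine Finset.sum_congr rfl fun i _ => ?_
        rw [Finset.sum_comm]
        refine Finset.sum_congr rfl fun m _ => ?_
        rw [Φ1_tmul, ← (Rb i).eq, tmul_sum, tmul_sum, map_sum]
        exact Finset.sum_congr rfl fun l _ => (Φ_tmul _ _ _ _).symm
    _ = ∑ i ∈ s, ∑ l ∈ (Rb i).index,
          Φ1 (h₁ i ⊗ₜ[k] ((Rb i).left l ⊗ₜ[k] (Rb i).right l)) :=
        coassoc_sums Φ1 s h₁ h₂ hrep.symm Ra Rb
    _ = ∑ i ∈ s, ∑ l ∈ (Rb i).index, ∑ n ∈ (Rw i l).index,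
          Φ (h₁ i ⊗ₜ[k] ((Rw i l).left n ⊗ₜ[k] ((Rw i l).right n ⊗ₜ[k] (Rb i).right l))) := by
        refine Finset.sum_congr rfl fun i _ => ?_
        have inner := coassoc_sums (Φ ∘ₗ (TensorProduct.mk k H (H ⊗[k] (H ⊗[k] H))) (h₁ i))
          (Rb i).index (Rb i).left (Rb i).right (Rb i).eq (Rw i) (Rz i)
        simp only [LinearMap.comp_apply, TensorProduct.mk_apply] at inner
        refine Eq.trans (Finset.sum_congr rfl fun l _ => ?_) inner.symm
        rw [Φ1_tmul, ← (Rz i l).eq, tmul_sum, tmul_sum, map_sum]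
    _ = ∑ i ∈ s, (Sinv (j (h₂ i)) * r * j (h₁ i)) ⊗ₜ[k] (1 : H) := by
        refine Finset.sum_congr rfl fun i _ => ?_
        calc ∑ l ∈ (Rb i).index, ∑ n ∈ (Rw i l).index,
              Φ (h₁ i ⊗ₜ[k] ((Rw i l).left n ⊗ₜ[k] ((Rw i l).right n ⊗ₜ[k] (Rb i).right l)))
            = ∑ l ∈ (Rb i).index, Coalgebra.counit (R := k) ((Rb i).left l) •
                ((Sinv (j ((Rb i).right l)) * r * j (h₁ i)) ⊗ₜ[k] (1 : H)) := by
              refine Finset.sum_congr rfl fun l _ => ?_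
              have hx : ∑ n ∈ (Rw i l).index,
                  jl ((Rw i l).left n) ⊗ₜ[k] jl ((Rw i l).right n) =
                  Coalgebra.comul (R := k) (j ((Rb i).left l)) := by
                rw [hcomul_j, ← (Rw i l).eq, map_sum]
                simp only [TensorProduct.map_tmul]
              have hsum := sum_Sinv_right_mul_left Sinv hS1 hS2 (j ((Rb i).left l))
                (Rw i l).index _ _ hx
              have hcollapse : ∑ n ∈ (Rw i l).index,
                  p (Sinv (j ((Rw i l).right n))) * (Rw i l).left n =
                  algebraMap k H (Coalgebra.counit (R := k) ((Rb i).left l)) := by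
                have : ∀ n, p (Sinv (j ((Rw i l).right n))) * (Rw i l).left n =
                    p (Sinv (jl ((Rw i l).right n)) * jl ((Rw i l).left n)) := by
                  intro n
                  rw [map_mul]
                  congr 1
                  exact (hpj _).symm
                rw [Finset.sum_congr rfl fun n _ => this n, ← map_sum, hsum]
                rw [AlgHomClass.commutes, hcounit_j]
              calc ∑ n ∈ (Rw i l).index,
                    Φ (h₁ i ⊗ₜ[k] ((Rw i l).left n ⊗ₜ[k] ((Rw i l).right n ⊗ₜ[k] (Rb i).right l)))
                  = (Sinv (j ((Rb i).right l)) * r * j (h₁ i)) ⊗ₜ[k]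
                      (∑ n ∈ (Rw i l).index,
                        p (Sinv (j ((Rw i l).right n))) * (Rw i l).left n) := by
                    rw [tmul_sum]
                    exact Finset.sum_congr rfl fun n _ => Φ_tmul _ _ _ _
                _ = _ := by
                    rw [hcollapse, Algebra.algebraMap_eq_smul_one, tmul_smul]
          _ = (Sinv (j (h₂ i)) * r * j (h₁ i)) ⊗ₜ[k] (1 : H) := by
              have : ∀ l ∈ (Rb i).index, Coalgebra.counit (R := k) ((Rb i).left l) •
                  ((Sinv (j ((Rb i).right l)) * r * j (h₁ i)) ⊗ₜ[k] (1 : H)) =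
                  ((Sinv (j (Coalgebra.counit (R := k) ((Rb i).left l) • (Rb i).right l)) * r *
                    j (h₁ i)) ⊗ₜ[k] (1 : H)) := by
                intro l _
                rw [map_smul, map_smul, smul_mul_assoc, smul_mul_assoc, smul_tmul']
              rw [Finset.sum_congr rfl this]
              have : (∑ l ∈ (Rb i).index,
                  (Sinv (j (Coalgebra.counit (R := k) ((Rb i).left l) • (Rb i).right l)) * r *
                    j (h₁ i))) ⊗ₜ[k] (1 : H) =
                  (Sinv (j (h₂ i)) * r * j (h₁ i)) ⊗ₜ[k] (1 : H) := by
                rw [show (∑ l ∈ (Rb i).index,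
                    (Sinv (j (Coalgebra.counit (R := k) ((Rb i).left l) • (Rb i).right l)) * r *
                      j (h₁ i))) = Sinv (j (h₂ i)) * r * j (h₁ i) from ?_]
                rw [show Sinv (j (h₂ i)) = Sinv (j (∑ l ∈ (Rb i).index,
                    Coalgebra.counit (R := k) ((Rb i).left l) • (Rb i).right l)) from by
                  rw [sum_counit_smul_left (Rb i)]]
                rw [map_sum, map_sum, Finset.sum_mul, Finset.sum_mul]
              rw [← this, sum_tmul]
    _ = (∑ i ∈ s, Sinv (j (h₂ i)) * r * j (h₁ i)) ⊗ₜ[k] (1 : H) := (sum_tmul _ _ _).symm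
end
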